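/- Let A₁, A₂ ⊆ E be nonempty finite sets, let λ ≥ 0, and let (Z, ξ) be a global Carathéodory solution of the inclusion Ż_τ ∈ −(1/4)·G_λ(Z_τ). Then for all 0 ≤ a ≤ b < ∞, Φ_λ(Z_b) − Φ_λ(Z_a) = −4·∫_a^b ‖ξ_τ‖² dτ. In particular, τ ↦ Φ_λ(Z_τ) is nonincreasing on [0,∞). -/

import Mathlib

open MeasureTheory Metric Filter Topology Set intervalIntegral RealInnerProductSpace

section Machinery

variable {E : Type*} [NormedAddCommGroup E] [NormedSpace ℝ E] [CompleteSpace E]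

theorem ae_hasDerivAt_primitive {f : ℝ → E} (hf : LocallyIntegrable f volume) :
    ∀ᵐ x : ℝ, HasDerivAt (fun t => ∫ s in (0:ℝ)..t, f s) (f x) x := by
  filter_upwards [IsUnifLocDoublingMeasure.ae_tendsto_average_norm_sub (μ := volume) hf 1]
    with x hx
  have hδ : Tendsto (fun h : ℝ => |h| / 2) (𝓝[≠] (0:ℝ)) (𝓝[>] 0) := by
    apply tendsto_nhdsWithin_iff.2
    refine ⟨?_, ?_⟩
    · have h1 : Tendsto (fun h : ℝ => |h| / 2) (𝓝 (0:ℝ)) (𝓝 (|(0:ℝ)| / 2)) :=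
        (continuous_abs.tendsto (0:ℝ)).div_const 2
      simpa using h1.mono_left nhdsWithin_le_nhds
    · filter_upwards [self_mem_nhdsWithin] with h (hh : h ≠ 0)
      have : 0 < |h| := abs_pos.2 hh
      exact Set.mem_Ioi.2 (by linarith)
  have hmem : ∀ᶠ h : ℝ in 𝓝[≠] (0:ℝ), x ∈ closedBall (x + h/2) (1 * (|h|/2)) := by
    filter_upwards with h
    simp only [mem_closedBall, one_mul]
    rw [Real.dist_eq, abs_sub_comm]
    have : x + h/2 - x = h/2 := by ring
    rw [this, abs_div]
    simp
  have key := hx (fun h => x + h/2) (fun h => |h|/2) hδ hmem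
  rw [hasDerivAt_iff_tendsto]
  have hInt : ∀ u v : ℝ, IntervalIntegrable f volume u v := fun u v =>
    ⟨(hf.integrableOn_isCompact isCompact_Icc).mono_set Set.Ioc_subset_Icc_self,
     (hf.integrableOn_isCompact isCompact_Icc).mono_set Set.Ioc_subset_Icc_self⟩
  have bound : ∀ x' : ℝ, x' ≠ x →
      ‖x' - x‖⁻¹ * ‖(∫ s in (0:ℝ)..x', f s) - (∫ s in (0:ℝ)..x, f s) - (x' - x) • f x‖ ≤
        ⨍ y in closedBall (x + (x' - x)/2) (|x' - x|/2), ‖f y - f x‖ := by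
    intro x' hne
    set h := x' - x with hh
    have hB : closedBall (x + h/2) (|h|/2) = Icc (x + h/2 - |h|/2) (x + h/2 + |h|/2) :=
      Real.closedBall_eq_Icc
    have hsub : Set.uIoc x x' ⊆ closedBall (x + h/2) (|h|/2) := by
      rw [hB]
      intro y hy
      rcases le_or_gt x x' with hle | hlt
      · rw [Set.uIoc_of_le hle] at hy
        have h0 : 0 ≤ h := by rw [hh]; linarith
        rw [abs_of_nonneg h0]
        simp only [Set.mem_Ioc] at hy
        constructor <;> [linarith [hy.1]; linarith [hy.2]]
      · rw [Set.uIoc_of_ge hlt.le] at hy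
        have h0 : h ≤ 0 := by rw [hh]; linarith
        rw [abs_of_nonpos h0]
        simp only [Set.mem_Ioc] at hy
        constructor <;> [linarith [hy.1]; linarith [hy.2]]
    have e1 : (∫ s in (0:ℝ)..x', f s) - (∫ s in (0:ℝ)..x, f s) = ∫ s in x..x', f s := by
      rw [intervalIntegral.integral_interval_sub_left (hInt 0 x') (hInt 0 x)]
    have e2 : (x' - x) • f x = ∫ _ in x..x', f x := by rw [intervalIntegral.integral_const]
    rw [e1, e2, ← intervalIntegral.integral_sub (hInt x x') intervalIntegrable_const]
    have hball_int : IntegrableOn (fun y => ‖f y - f x‖) (closedBall (x + h/2) (|h|/2)) volume := by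
      apply Integrable.norm
      exact (hf.integrableOn_isCompact (isCompact_closedBall _ _)).sub
        (integrableOn_const (by rw [hB]; exact measure_Icc_lt_top.ne))
    have step1 : ‖∫ s in x..x', f s - f x‖ ≤ ∫ y in closedBall (x + h/2) (|h|/2), ‖f y - f x‖ := by
      refine (intervalIntegral.norm_integral_le_integral_norm_uIoc (f := fun s => f s - f x)).trans ?_
      exact setIntegral_mono_set hball_int (Filter.Eventually.of_forall fun y => norm_nonneg _)
        (HasSubset.Subset.eventuallyLE hsub)
    have hvol : (volume (closedBall (x + h/2) (|h|/2))).toReal = |h| := by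
      rw [hB, Real.volume_Icc]
      rw [ENNReal.toReal_ofReal (by linarith [abs_nonneg h] : (0:ℝ) ≤ x + h/2 + |h|/2 - (x + h/2 - |h|/2))]
      ring
    rw [average_eq, smul_eq_mul, measureReal_restrict_apply_univ, measureReal_def, hvol]
    have habs : 0 < |h| := abs_pos.2 (sub_ne_zero.2 hne)
    rw [show ‖x' - x‖ = |h| from by rw [hh, Real.norm_eq_abs]]
    exact mul_le_mul_of_nonneg_left step1 (by positivity)
  have comp : Tendsto (fun x' : ℝ => x' - x) (𝓝[≠] x) (𝓝[≠] (0:ℝ)) := by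
    apply tendsto_nhdsWithin_iff.2
    refine ⟨?_, ?_⟩
    · have h1 : Tendsto (fun x' : ℝ => x' - x) (𝓝 x) (𝓝 (x - x)) :=
        (continuous_id.sub continuous_const).tendsto x
      rw [sub_self] at h1
      exact h1.mono_left nhdsWithin_le_nhds
    · filter_upwards [self_mem_nhdsWithin] with y (hy : y ≠ x)
      exact sub_ne_zero.2 hy
  have main : Tendsto (fun x' : ℝ => ‖x' - x‖⁻¹ *
      ‖(∫ s in (0:ℝ)..x', f s) - (∫ s in (0:ℝ)..x, f s) - (x' - x) • f x‖) (𝓝[≠] x) (𝓝 0) := by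
    apply squeeze_zero' (Filter.Eventually.of_forall fun x' => by positivity)
    · filter_upwards [self_mem_nhdsWithin] with x' (hx' : x' ≠ x)
      exact bound x' hx'
    · exact key.comp comp
  rw [← nhdsNE_sup_pure x, tendsto_sup]
  refine ⟨main, ?_⟩
  have hzero : ‖x - x‖⁻¹ *
      ‖(∫ s in (0:ℝ)..x, f s) - (∫ s in (0:ℝ)..x, f s) - (x - x) • f x‖ = 0 := by simp
  have ht := tendsto_pure_nhds (fun x' : ℝ => ‖x' - x‖⁻¹ *
      ‖(∫ s in (0:ℝ)..x', f s) - (∫ s in (0:ℝ)..x, f s) - (x' - x) • f x‖) x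
  rw [hzero] at ht
  exact ht

/-- The isolated points of any set in a second countable space form a countable set. -/
theorem countable_isolated_pts (S : Set ℝ) :
    Set.Countable {x ∈ S | ¬ (𝓝[S \ {x}] x).NeBot} := by
  obtain ⟨b, hbc, -, hb⟩ := TopologicalSpace.exists_countable_basis ℝ
  have : {x ∈ S | ¬ (𝓝[S \ {x}] x).NeBot} ⊆
      ⋃ B ∈ {B ∈ b | (B ∩ S).Subsingleton}, (B ∩ S) := by
    intro x hx
    obtain ⟨hxS, hiso⟩ := hx
    rw [not_neBot, ← empty_mem_iff_bot, mem_nhdsWithin] at hiso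
    obtain ⟨U, hUo, hxU, hU⟩ := hiso
    obtain ⟨B, hBb, hxB, hBU⟩ := hb.isOpen_iff.1 hUo x hxU
    refine mem_biUnion (x := B) ⟨hBb, ?_⟩ ⟨hxB, hxS⟩
    intro y ⟨hyB, hyS⟩ z ⟨hzB, hzS⟩
    have hy : y ∉ S \ {x} := fun hy' => hU ⟨hBU hyB, hy'⟩
    have hz : z ∉ S \ {x} := fun hz' => hU ⟨hBU hzB, hz'⟩
    simp only [mem_diff, mem_singleton_iff, not_and, not_not] at hy hz
    rw [hy hyS, hz hzS]
  refine Set.Countable.mono this ?_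
  refine Set.Countable.biUnion (hbc.mono (Set.sep_subset _ _)) ?_
  intro B hB
  exact hB.2.countable

/-- If two functions agree on a set and both are differentiable a.e., then the derivatives
agree a.e. on that set. -/
theorem ae_deriv_eq_on_contact {F G f g : ℝ → ℝ}
    (hF : ∀ᵐ x, HasDerivAt F (f x) x) (hG : ∀ᵐ x, HasDerivAt G (g x) x) :
    ∀ᵐ x, F x = G x → f x = g x := by
  set S := {y | F y = G y} with hS
  have hC : volume {x ∈ S | ¬ (𝓝[S \ {x}] x).NeBot} = 0 :=
    (countable_isolated_pts S).measure_zero _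
  filter_upwards [hF, hG, measure_eq_zero_iff_ae_notMem.mp hC] with x hFx hGx hCx hxS
  have hxS' : x ∈ S := hxS
  have hNB : (𝓝[S \ {x}] x).NeBot := by
    by_contra hnb
    exact hCx ⟨hxS', hnb⟩
  have hle : 𝓝[S \ {x}] x ≤ 𝓝[≠] x :=
    nhdsWithin_mono x (fun y hy => hy.2)
  have tF : Tendsto (slope F x) (𝓝[S \ {x}] x) (𝓝 (f x)) :=
    (hasDerivAt_iff_tendsto_slope.1 hFx).mono_left hle
  have tG : Tendsto (slope G x) (𝓝[S \ {x}] x) (𝓝 (g x)) :=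
    (hasDerivAt_iff_tendsto_slope.1 hGx).mono_left hle
  have heq : slope F x =ᶠ[𝓝[S \ {x}] x] slope G x := by
    filter_upwards [self_mem_nhdsWithin] with y hy
    have hyS : F y = G y := hy.1
    simp only [slope_def_field]
    rw [hyS, hxS']
  exact tendsto_nhds_unique (tF.congr' heq) tG

theorem hasDerivAt_infDist_sq {E : Type*} [NormedAddCommGroup E]
    {A : Set E} (hfin : A.Finite) (hne : A.Nonempty)
    {X : ℝ → E} {g : E → ℝ} {τ c : ℝ}
    (hder : ∀ a ∈ A, HasDerivAt (fun t => ‖X t - a‖^2) (g a) τ)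
    (hc : ∀ a ∈ A, ‖X τ - a‖ = Metric.infDist (X τ) A → g a = c) :
    HasDerivAt (fun t => Metric.infDist (X t) A ^ 2) c τ := by
  have hAcp : IsCompact A := hfin.isCompact
  have hnearest : ∀ x : E, ∃ a ∈ A, Metric.infDist x A = ‖x - a‖ := by
    intro x
    obtain ⟨a, ha, hd⟩ := hAcp.exists_infDist_eq_dist hne x
    exact ⟨a, ha, by rwa [dist_eq_norm] at hd⟩
  have hle : ∀ (t : ℝ) (a : E), a ∈ A → Metric.infDist (X t) A ^ 2 ≤ ‖X t - a‖ ^ 2 := by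
    intro t a ha
    have h1 : Metric.infDist (X t) A ≤ ‖X t - a‖ := by
      rw [← dist_eq_norm]; exact Metric.infDist_le_dist_of_mem ha
    exact pow_le_pow_left₀ Metric.infDist_nonneg h1 2
  rw [hasDerivAt_iff_isLittleO, Asymptotics.isLittleO_iff]
  intro ε hε
  obtain ⟨astar, hastarA, hastar⟩ := hnearest (X τ)
  -- lower bound eventually, for each a ∈ A
  have hlow : ∀ᶠ t in 𝓝 τ, ∀ a ∈ A,
      Metric.infDist (X τ) A ^ 2 + (t - τ) * c - ε * |t - τ| ≤ ‖X t - a‖ ^ 2 := by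
    rw [eventually_all_finite hfin]
    intro a ha
    by_cases hact : ‖X τ - a‖ = Metric.infDist (X τ) A
    · have hga : g a = c := hc a ha hact
      have h1 := (hasDerivAt_iff_isLittleO.1 (hder a ha))
      rw [Asymptotics.isLittleO_iff] at h1
      filter_upwards [h1 hε] with t ht
      rw [hga] at ht
      have h2 : |‖X t - a‖^2 - ‖X τ - a‖^2 - (t - τ) * c| ≤ ε * |t - τ| := by
        simpa [Real.norm_eq_abs] using ht
      have h3 : ‖X τ - a‖^2 = Metric.infDist (X τ) A ^ 2 := by rw [hact]
      have h4 := abs_le.1 h2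
      linarith [h4.1, h4.2]
    · have hstrict : Metric.infDist (X τ) A ^ 2 < ‖X τ - a‖ ^ 2 := by
        have h1 : Metric.infDist (X τ) A ≤ ‖X τ - a‖ := by
          rw [← dist_eq_norm]; exact Metric.infDist_le_dist_of_mem ha
        have h2 : Metric.infDist (X τ) A < ‖X τ - a‖ := lt_of_le_of_ne h1 (Ne.symm hact)
        exact pow_lt_pow_left₀ h2 Metric.infDist_nonneg (by norm_num)
      have htL : Tendsto (fun t => Metric.infDist (X τ) A ^ 2 + (t - τ) * c - ε * |t - τ|)
          (𝓝 τ) (𝓝 (Metric.infDist (X τ) A ^ 2)) := by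
        have : Continuous (fun t : ℝ => Metric.infDist (X τ) A ^ 2 + (t - τ) * c - ε * |t - τ|) := by
          continuity
        have h5 := this.tendsto τ
        simpa using h5
      have htR : Tendsto (fun t => ‖X t - a‖ ^ 2) (𝓝 τ) (𝓝 (‖X τ - a‖ ^ 2)) :=
        (hder a ha).continuousAt
      exact (htL.eventually_lt htR hstrict).mono fun t ht => ht.le
  -- upper bound eventually using astar
  have hupp : ∀ᶠ t in 𝓝 τ,
      ‖X t - astar‖ ^ 2 ≤ Metric.infDist (X τ) A ^ 2 + (t - τ) * c + ε * |t - τ| := by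
    have hga : g astar = c := hc astar hastarA hastar.symm
    have h1 := (hasDerivAt_iff_isLittleO.1 (hder astar hastarA))
    rw [Asymptotics.isLittleO_iff] at h1
    filter_upwards [h1 hε] with t ht
    rw [hga] at ht
    have h2 : |‖X t - astar‖^2 - ‖X τ - astar‖^2 - (t - τ) * c| ≤ ε * |t - τ| := by
      simpa [Real.norm_eq_abs] using ht
    have h3 : ‖X τ - astar‖^2 = Metric.infDist (X τ) A ^ 2 := by rw [hastar]
    have h4 := abs_le.1 h2
    linarith [h4.1, h4.2]
  filter_upwards [hlow, hupp] with t hlo hup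
  obtain ⟨at_, hat_A, hat_⟩ := hnearest (X t)
  have hmt_low : Metric.infDist (X τ) A ^ 2 + (t - τ) * c - ε * |t - τ| ≤
      Metric.infDist (X t) A ^ 2 := by
    rw [hat_] at *
    exact hlo at_ hat_A
  have hmt_up : Metric.infDist (X t) A ^ 2 ≤
      Metric.infDist (X τ) A ^ 2 + (t - τ) * c + ε * |t - τ| :=
    (hle t astar hastarA).trans hup
  rw [Real.norm_eq_abs, Real.norm_eq_abs, abs_le]
  constructor <;> simp only [smul_eq_mul] <;> linarith

variable {u φ H : ℝ → ℝ} {a b : ℝ}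

/-- FTC-2 (inequality form) for a.e. differentiable functions satisfying an
absolute-continuity bound. -/
theorem sub_le_integral_ae (hab : a ≤ b)
    (hcont : ContinuousOn u (Icc a b))
    (hH : IntegrableOn H (Icc a b) volume)
    (hAC : ∀ s t : ℝ, a ≤ s → s ≤ t → t ≤ b → u t - u s ≤ ∫ r in Ioc s t, H r)
    (hφ : IntegrableOn φ (Icc a b) volume)
    {N : Set ℝ} (hN : volume N = 0)
    (hd : ∀ t ∈ Ico a b, t ∉ N → HasDerivWithinAt u (φ t) (Ioi t) t) :
    u b - u a ≤ ∫ r in Ioc a b, φ r := by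
  refine le_of_forall_pos_le_add fun ε εpos => ?_
  have ε3pos : 0 < ε / 3 := by linarith
  -- the combined dominating function
  set HH : ℝ → ℝ := fun r => |H r| + |φ r| with hHHdef
  have hHHnn : ∀ r, 0 ≤ HH r := fun r => by positivity
  have hHH : IntegrableOn HH (Icc a b) volume := hH.abs.add hφ.abs
  -- measurable null superset of N
  set N₂ : Set ℝ := toMeasurable volume N with hN₂def
  have hN₂meas : MeasurableSet N₂ := measurableSet_toMeasurable volume N
  have hN₂null : volume N₂ = 0 := by rw [hN₂def, measure_toMeasurable]; exact hN
  have hNN₂ : N ⊆ N₂ := subset_toMeasurable volume N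
  -- the measure with density HH
  set ν : Measure ℝ := (volume.restrict (Icc a b)).withDensity
      (fun r => ENNReal.ofReal (HH r)) with hνdef
  have hνfin : IsFiniteMeasure ν := by
    constructor
    rw [hνdef, withDensity_apply _ MeasurableSet.univ, Measure.restrict_univ]
    calc ∫⁻ r, ENNReal.ofReal (HH r) ∂(volume.restrict (Icc a b))
        ≤ ∫⁻ r, ‖HH r‖₊ ∂(volume.restrict (Icc a b)) := by
          apply lintegral_mono fun r => ?_
          rw [← enorm_eq_nnnorm, ← ofReal_norm]
          exact ENNReal.ofReal_le_ofReal (le_abs_self _)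
      _ < ⊤ := hHH.2
  have hνN₂ : ν N₂ = 0 := by
    apply (withDensity_absolutelyContinuous _ _) _
    rw [Measure.restrict_apply hN₂meas]
    exact measure_mono_null (inter_subset_left) hN₂null
  -- choose an open superset of N₂ with small ν-measure
  obtain ⟨V, hN₂V, hVopen, hνV⟩ : ∃ V, N₂ ⊆ V ∧ IsOpen V ∧ ν V < ENNReal.ofReal (ε / 3) := by
    have : ν N₂ < ENNReal.ofReal (ε / 3) := by
      rw [hνN₂]; exact ENNReal.ofReal_pos.2 ε3pos
    exact N₂.exists_isOpen_lt_of_lt _ this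
  -- the V-indicator of HH
  set hv : ℝ → ℝ := V.indicator HH with hhvdef
  have hhvnn : ∀ r, 0 ≤ hv r := fun r => by
    rw [hhvdef]; exact indicator_nonneg (fun x _ => hHHnn x) r
  have hhvint : IntegrableOn hv (Icc a b) volume := hHH.indicator hVopen.measurableSet
  -- smallness of integrals of hv over measurable subsets of [a, b]
  have hVsmall : ∀ s : Set ℝ, MeasurableSet s → s ⊆ Icc a b → ∫ r in s, hv r ≤ ε / 3 := by
    intro s hsmeas hs
    have h0 : ∫ r in s, hv r = (∫⁻ r in s, ENNReal.ofReal (hv r)).toReal := by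
      apply integral_eq_lintegral_of_nonneg_ae (Filter.Eventually.of_forall hhvnn)
      exact (hhvint.mono_set hs).1
    rw [h0]
    have h1 : (∫⁻ r in s, ENNReal.ofReal (hv r)) ≤ ν V := by
      calc (∫⁻ r in s, ENNReal.ofReal (hv r))
          = ∫⁻ r in s, (V.indicator fun x => ENNReal.ofReal (HH x)) r := by
            apply lintegral_congr fun r => ?_
            rw [hhvdef]
            by_cases hrV : r ∈ V <;> simp [indicator, hrV]
        _ = ∫⁻ r in V ∩ s, ENNReal.ofReal (HH r) := by
            rw [lintegral_indicator hVopen.measurableSet,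
              Measure.restrict_restrict hVopen.measurableSet]
        _ ≤ ∫⁻ r in V ∩ Icc a b, ENNReal.ofReal (HH r) := by
            exact lintegral_mono' (Measure.restrict_mono (inter_subset_inter_right V hs) le_rfl)
              le_rfl
        _ = ν V := by
            rw [hνdef, withDensity_apply _ hVopen.measurableSet,
              Measure.restrict_restrict hVopen.measurableSet]
    calc (∫⁻ r in s, ENNReal.ofReal (hv r)).toReal ≤ (ν V).toReal := by
          apply ENNReal.toReal_mono (ne_of_lt (lt_of_lt_of_le hνV le_top)) h1
      _ ≤ ε / 3 := ENNReal.toReal_le_of_le_ofReal ε3pos.le hνV.le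
  -- Vitali–Carathéodory majorant of φ
  rcases exists_lt_lowerSemicontinuous_integral_lt φ hφ ε3pos with
    ⟨G', φ_lt_G', G'cont, G'int0, G'lt_top, hG'⟩
  have G'int : IntegrableOn (fun w => (G' w).toReal) (Icc a b) volume := G'int0
  have hG'ii : ∀ s t : ℝ, s ∈ Icc a b → t ∈ Icc a b →
      IntervalIntegrable (fun w => (G' w).toReal) volume s t := fun s t hs ht =>
    (G'int.mono_set (uIcc_subset_Icc hs ht)).intervalIntegrable
  have hhvii : ∀ s t : ℝ, s ∈ Icc a b → t ∈ Icc a b →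
      IntervalIntegrable hv volume s t := fun s t hs ht =>
    (hhvint.mono_set (uIcc_subset_Icc hs ht)).intervalIntegrable
  -- pointwise a.e. comparison : H ≤ toReal ∘ G' + hv on subsets of V ∩ Icc a b
  have hφG' : ∀ᵐ r ∂(volume.restrict (Icc a b)), φ r ≤ (G' r).toReal := by
    filter_upwards [G'lt_top] with r hr
    have h1 : (φ r : EReal) < ((G' r).toReal : EReal) := by
      rw [EReal.coe_toReal hr.ne (((EReal.bot_lt_coe _).trans (φ_lt_G' r)).ne')]
      exact φ_lt_G' r
    exact (EReal.coe_lt_coe_iff.1 h1).le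
  -- the induction set
  set S : Set ℝ :=
    {t | u t - u a ≤ (∫ w in a..t, (G' w).toReal) + ∫ w in a..t, hv w} with hSdef
  have S_closed : IsClosed (S ∩ Icc a b) := by
    have cont : ContinuousOn
        (fun t => (u t - u a, (∫ w in a..t, (G' w).toReal) + ∫ w in a..t, hv w)) (Icc a b) := by
      rw [← uIcc_of_le hab] at G'int hcont hhvint ⊢
      exact (hcont.sub continuousOn_const).prodMk
        ((continuousOn_primitive_interval G'int).add (continuousOn_primitive_interval hhvint))
    simp only [hSdef, inter_comm]
    exact cont.preimage_isClosed_of_isClosed isClosed_Icc isClosed_le_prod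
  have main : Icc a b ⊆ S := by
    refine S_closed.Icc_subset_of_forall_exists_gt
      (by simp only [hSdef, mem_setOf_eq, integral_same, sub_self, add_zero, le_refl])
      fun t ht v t_lt_v => ?_
    have hta : a ≤ t := ht.2.1
    have htb : t < b := ht.2.2
    have htIcc : t ∈ Icc a b := ⟨hta, htb.le⟩
    by_cases htV : t ∈ V
    · -- inside the open set V : use the absolute continuity bound
      obtain ⟨δ, δpos, hδ⟩ := Metric.isOpen_iff.1 hVopen t htV
      set x := min (t + δ/2) (min v b) with hxdef
      have hxt : t < x := lt_min (by linarith) (lt_min t_lt_v htb)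
      have hxb : x ≤ b := (min_le_right _ _).trans (min_le_right _ _)
      have hxv : x ≤ v := (min_le_right _ _).trans (min_le_left _ _)
      have hxIcc : x ∈ Icc a b := ⟨hta.trans hxt.le, hxb⟩
      have hIocV : Ioc t x ⊆ V := by
        intro y hy
        apply hδ
        rw [Real.ball_eq_Ioo]
        have h2 : y ≤ t + δ/2 := hy.2.trans (min_le_left _ _)
        exact ⟨by linarith [hy.1], by linarith⟩
      have hIocIcc : Ioc t x ⊆ Icc a b := fun y hy => ⟨hta.trans hy.1.le, hy.2.trans hxb⟩
      refine ⟨x, ?_, hxt, hxv⟩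
      -- prove the defining inequality at x
      have hstep : u x - u t ≤ ∫ r in Ioc t x, ((G' r).toReal + hv r) := by
        refine (hAC t x hta hxt.le hxb).trans ?_
        apply setIntegral_mono_ae_restrict (hH.mono_set hIocIcc)
          ((G'int.mono_set hIocIcc).add (hhvint.mono_set hIocIcc))
        have h1 : ∀ᵐ r ∂(volume.restrict (Ioc t x)), φ r ≤ (G' r).toReal :=
          ae_mono (Measure.restrict_mono hIocIcc le_rfl) hφG'
        have h2 : ∀ᵐ r ∂(volume.restrict (Ioc t x)), r ∈ Ioc t x :=
          ae_restrict_mem measurableSet_Ioc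
        filter_upwards [h1, h2] with r hr1 hr2
        have h3 : hv r = HH r := indicator_of_mem (hIocV hr2) HH
        have h4 : H r ≤ |H r| := le_abs_self _
        have h5 : 0 ≤ (G' r).toReal + |φ r| := by
          have := neg_abs_le (φ r)
          linarith
        have h6 : HH r = |H r| + |φ r| := rfl
        show H r ≤ (G' r).toReal + hv r
        rw [h3, h6]
        linarith
      have hadd : ∫ r in Ioc t x, ((G' r).toReal + hv r) =
          (∫ w in t..x, (G' w).toReal) + ∫ w in t..x, hv w := by
        rw [integral_of_le hxt.le, integral_of_le hxt.le]
        exact integral_add (G'int.mono_set hIocIcc) (hhvint.mono_set hIocIcc)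
      have hG'add : (∫ w in a..t, (G' w).toReal) + ∫ w in t..x, (G' w).toReal =
          ∫ w in a..x, (G' w).toReal :=
        integral_add_adjacent_intervals (hG'ii a t (left_mem_Icc.2 hab) htIcc)
          (hG'ii t x htIcc hxIcc)
      have hhvadd : (∫ w in a..t, hv w) + ∫ w in t..x, hv w = ∫ w in a..x, hv w :=
        integral_add_adjacent_intervals (hhvii a t (left_mem_Icc.2 hab) htIcc)
          (hhvii t x htIcc hxIcc)
      have ht1 : u t - u a ≤ (∫ w in a..t, (G' w).toReal) + ∫ w in a..t, hv w := ht.1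
      simp only [hSdef, mem_setOf_eq]
      calc u x - u a = (u t - u a) + (u x - u t) := by abel
        _ ≤ ((∫ w in a..t, (G' w).toReal) + ∫ w in a..t, hv w) +
            ((∫ w in t..x, (G' w).toReal) + ∫ w in t..x, hv w) := by
            rw [← hadd]; exact add_le_add ht1 hstep
        _ = (∫ w in a..x, (G' w).toReal) + ∫ w in a..x, hv w := by
            rw [← hG'add, ← hhvadd]; ring
    · -- outside V : use the derivative, as in mathlib's proof
      have htN : t ∉ N := fun h => htV (hN₂V (hNN₂ h))
      obtain ⟨y, φ_lt_y', y_lt_G'⟩ : ∃ y : ℝ, (φ t : EReal) < y ∧ (y : EReal) < G' t :=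
        EReal.lt_iff_exists_real_btwn.1 (φ_lt_G' t)
      have φ_lt_y : φ t < y := EReal.coe_lt_coe_iff.1 φ_lt_y'
      have I1 : ∀ᶠ x in 𝓝[>] t, (x - t) * y ≤ ∫ w in t..x, (G' w).toReal := by
        have B : ∀ᶠ x in 𝓝 t, (y : EReal) < G' x := G'cont.lowerSemicontinuousAt _ _ y_lt_G'
        rcases mem_nhds_iff_exists_Ioo_subset.1 B with ⟨m, M, ⟨hm, hM⟩, hmM⟩
        have hmem2 : Ioo t (min M b) ∈ 𝓝[>] t := Ioo_mem_nhdsGT (lt_min hM htb)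
        filter_upwards [hmem2] with x hx
        have hsub2 : Icc t x ⊆ Icc a b := Icc_subset_Icc hta (hx.2.le.trans (min_le_right _ _))
        calc (x - t) * y = ∫ _ in Icc t x, y := by
              simp only [MeasureTheory.integral_const, MeasurableSet.univ, Real.volume_Icc,
                Measure.restrict_apply, univ_inter, smul_eq_mul]
              rw [measureReal_restrict_apply_univ, Real.volume_real_Icc,
                  max_eq_left (by linarith [hx.1] : (0:ℝ) ≤ x - t)]
          _ ≤ ∫ w in t..x, (G' w).toReal := by
              rw [intervalIntegral.integral_of_le hx.1.le, ← integral_Icc_eq_integral_Ioc]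
              apply setIntegral_mono_ae_restrict
              · exact integrableOn_const measure_Icc_lt_top.ne
              · exact G'int.mono_set hsub2
              · have C1 : ∀ᵐ w ∂volume.restrict (Icc t x), G' w < ⊤ :=
                  ae_mono (Measure.restrict_mono hsub2 le_rfl) G'lt_top
                have C2 : ∀ᵐ w ∂volume.restrict (Icc t x), w ∈ Icc t x :=
                  ae_restrict_mem measurableSet_Icc
                filter_upwards [C1, C2] with w G'w hw
                apply EReal.coe_le_coe_iff.1
                have hwmM : w ∈ Ioo m M :=
                  ⟨hm.trans_le hw.1, (hw.2.trans_lt hx.2).trans_le (min_le_left M b)⟩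
                refine (hmM hwmM).out.le.trans_eq ?_
                exact (EReal.coe_toReal G'w.ne (((EReal.bot_lt_coe _).trans (φ_lt_G' w)).ne')).symm
      have I2 : ∀ᶠ x in 𝓝[>] t, u x - u t ≤ (x - t) * y := by
        have hder := hd t ht.2 htN
        filter_upwards [hder.limsup_slope_le' (notMem_Ioi.2 le_rfl) φ_lt_y,
          self_mem_nhdsWithin] with x hx t_lt_x
        have := mul_le_mul_of_nonneg_left hx.le (sub_pos.2 t_lt_x.out).le
        rwa [← smul_eq_mul, sub_smul_slope] at this
      have I4 : ∀ᶠ x in 𝓝[>] t, x ∈ Ioc t (min v b) := by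
        refine mem_nhdsGT_iff_exists_Ioc_subset.2 ⟨min v b, ?_, Subset.rfl⟩
        simp only [lt_min_iff, mem_Ioi]
        exact ⟨t_lt_v, htb⟩
      rcases ((I1.and I2).and I4).exists with ⟨x, ⟨hx1, hx2⟩, hx4⟩
      have hxb : x ≤ b := hx4.2.trans (min_le_right _ _)
      have hxIcc : x ∈ Icc a b := ⟨hta.trans hx4.1.le, hxb⟩
      refine ⟨x, ?_, hx4.1, hx4.2.trans (min_le_left _ _)⟩
      have hhvnn' : 0 ≤ ∫ w in t..x, hv w :=
        intervalIntegral.integral_nonneg hx4.1.le fun w _ => hhvnn w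
      have hG'add : (∫ w in a..t, (G' w).toReal) + ∫ w in t..x, (G' w).toReal =
          ∫ w in a..x, (G' w).toReal :=
        integral_add_adjacent_intervals (hG'ii a t (left_mem_Icc.2 hab) htIcc)
          (hG'ii t x htIcc hxIcc)
      have hhvadd : (∫ w in a..t, hv w) + ∫ w in t..x, hv w = ∫ w in a..x, hv w :=
        integral_add_adjacent_intervals (hhvii a t (left_mem_Icc.2 hab) htIcc)
          (hhvii t x htIcc hxIcc)
      have ht1 : u t - u a ≤ (∫ w in a..t, (G' w).toReal) + ∫ w in a..t, hv w := ht.1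
      simp only [hSdef, mem_setOf_eq]
      calc u x - u a = (u t - u a) + (u x - u t) := by abel
        _ ≤ ((∫ w in a..t, (G' w).toReal) + ∫ w in a..t, hv w) + (x - t) * y :=
            add_le_add ht1 hx2
        _ ≤ ((∫ w in a..t, (G' w).toReal) + ∫ w in a..t, hv w) +
            ((∫ w in t..x, (G' w).toReal) + ∫ w in t..x, hv w) := by
            have := add_le_add hx1 hhvnn'
            linarith
        _ = (∫ w in a..x, (G' w).toReal) + ∫ w in a..x, hv w := by
            rw [← hG'add, ← hhvadd]; ring
  -- conclusion
  have hb : b ∈ S := main (right_mem_Icc.2 hab)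
  have hfin1 : ∫ w in a..b, hv w ≤ ε / 3 := by
    rw [integral_of_le hab]
    exact hVsmall (Ioc a b) measurableSet_Ioc Ioc_subset_Icc_self
  have hfin2 : ∫ w in a..b, (G' w).toReal ≤ (∫ r in Ioc a b, φ r) + ε / 3 := by
    rw [integral_of_le hab]
    have h1 : ∫ w in Ioc a b, (G' w).toReal = ∫ w in Icc a b, (G' w).toReal :=
      (integral_Icc_eq_integral_Ioc).symm
    have h2 : ∫ r in Ioc a b, φ r = ∫ r in Icc a b, φ r := (integral_Icc_eq_integral_Ioc).symm
    rw [h1, h2]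
    exact hG'.le
  have hbS : u b - u a ≤ (∫ w in a..b, (G' w).toReal) + ∫ w in a..b, hv w := hb
  calc u b - u a ≤ (∫ w in a..b, (G' w).toReal) + ∫ w in a..b, hv w := hbS
    _ ≤ ((∫ r in Ioc a b, φ r) + ε / 3) + ε / 3 := add_le_add hfin2 hfin1
    _ ≤ (∫ r in Ioc a b, φ r) + ε := by linarith

/-- FTC-2 (equality) for a.e. differentiable functions with an absolute continuity bound. -/
theorem integral_eq_sub_of_ae_hasDerivAt (hab : a ≤ b)
    (hcont : ContinuousOn u (Icc a b))
    (hH : IntegrableOn H (Icc a b) volume)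
    (hAC : ∀ s t : ℝ, a ≤ s → s ≤ t → t ≤ b → |u t - u s| ≤ ∫ r in Ioc s t, H r)
    (hφ : IntegrableOn φ (Icc a b) volume)
    {N : Set ℝ} (hN : volume N = 0)
    (hd : ∀ t ∈ Ico a b, t ∉ N → HasDerivAt u (φ t) t) :
    u b - u a = ∫ r in Ioc a b, φ r := by
  have h1 : u b - u a ≤ ∫ r in Ioc a b, φ r :=
    sub_le_integral_ae hab hcont hH
      (fun s t hs hst htb => (le_abs_self _).trans (hAC s t hs hst htb)) hφ hN
      (fun t ht htN => (hd t ht htN).hasDerivWithinAt)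
  have h2 : (fun t => -u t) b - (fun t => -u t) a ≤ ∫ r in Ioc a b, -φ r := by
    refine sub_le_integral_ae hab hcont.neg hH ?_ hφ.neg hN
      (fun t ht htN => ((hd t ht htN).neg).hasDerivWithinAt)
    intro s t hs hst htb
    have := (neg_le_abs (u t - u s)).trans (hAC s t hs hst htb)
    show -u t - -u s ≤ ∫ r in Ioc s t, H r
    linarith
  rw [MeasureTheory.integral_neg] at h2
  simp only at h2
  have h2' : ∫ r in Ioc a b, φ r ≤ u b - u a := by linarith
  linarith

end Machinery

/-- The set `Π_A(x)` of nearest points of `x` in `A`. -/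
def nearestPts {d : ℕ} (A : Set (EuclideanSpace ℝ (Fin d)))
    (x : EuclideanSpace ℝ (Fin d)) : Set (EuclideanSpace ℝ (Fin d)) :=
  {a ∈ A | ‖x - a‖ = Metric.infDist x A}

/-- The geometric distance potential `Φ_λ(x) = λ d_{A₁}(x)² + (1-λ) d_{A₂}(x)²`. -/
noncomputable def distPotential {d : ℕ} (A₁ A₂ : Set (EuclideanSpace ℝ (Fin d))) (lam : ℝ)
    (x : EuclideanSpace ℝ (Fin d)) : ℝ :=
  lam * (Metric.infDist x A₁) ^ 2 + (1 - lam) * (Metric.infDist x A₂) ^ 2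

/-- The outer-Clarke field
`G_λ(z) = conv {2λ(z-a₁) + 2(1-λ)(z-a₂) : a₁ ∈ Π_{A₁}(z), a₂ ∈ Π_{A₂}(z)}`. -/
noncomputable def outerClarkeField {d : ℕ} (A₁ A₂ : Set (EuclideanSpace ℝ (Fin d))) (lam : ℝ)
    (z : EuclideanSpace ℝ (Fin d)) : Set (EuclideanSpace ℝ (Fin d)) :=
  convexHull ℝ
    (Set.image2 (fun a₁ a₂ => (2 * lam) • (z - a₁) + (2 * (1 - lam)) • (z - a₂))
      (nearestPts A₁ z) (nearestPts A₂ z))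

/-- `(Z, ξ)` is a global Carathéodory solution of `Ż_τ ∈ -(1/4)·G_λ(Z_τ)`. -/
def IsCaratheodorySolution {d : ℕ} (A₁ A₂ : Set (EuclideanSpace ℝ (Fin d))) (lam : ℝ)
    (Z ξ : ℝ → EuclideanSpace ℝ (Fin d)) : Prop :=
  MeasureTheory.LocallyIntegrableOn ξ (Set.Ici 0) MeasureTheory.volume ∧
  (∀ᵐ τ ∂(MeasureTheory.volume.restrict (Set.Ici (0 : ℝ))),
    ξ τ ∈ (fun v => -(4 : ℝ)⁻¹ • v) '' outerClarkeField A₁ A₂ lam (Z τ)) ∧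
  (∀ τ : ℝ, 0 ≤ τ → Z τ = Z 0 + ∫ s in (0 : ℝ)..τ, ξ s)

theorem lyapunov_identity_along_caratheodory_solutions
    (d : ℕ) (hd : 1 ≤ d)
    (A₁ A₂ : Set (EuclideanSpace ℝ (Fin d)))
    (hA₁ : A₁.Nonempty) (hA₂ : A₂.Nonempty)
    (hA₁fin : A₁.Finite) (hA₂fin : A₂.Finite)
    (lam : ℝ) (hlam : 0 ≤ lam)
    (Z ξ : ℝ → EuclideanSpace ℝ (Fin d))
    (hsol : IsCaratheodorySolution A₁ A₂ lam Z ξ) :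
    (∀ a b : ℝ, 0 ≤ a → a ≤ b →
      distPotential A₁ A₂ lam (Z b) - distPotential A₁ A₂ lam (Z a) =
        -4 * ∫ τ in a..b, ‖ξ τ‖ ^ 2) ∧
    AntitoneOn (fun τ => distPotential A₁ A₂ lam (Z τ)) (Set.Ici 0) := by
  classical
  obtain ⟨hloc, hincl, hZeq⟩ := hsol
  -- the everywhere-defined velocity field
  set ξ' : ℝ → EuclideanSpace ℝ (Fin d) := (Set.Ici (0:ℝ)).indicator ξ with hξ'def
  have hξ'eq : ∀ τ : ℝ, 0 ≤ τ → ξ' τ = ξ τ := fun τ hτ => Set.indicator_of_mem hτ ξ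
  have hξ'loc : LocallyIntegrable ξ' volume := by
    rw [MeasureTheory.locallyIntegrable_iff]
    intro K hK
    rw [hξ'def, IntegrableOn, MeasureTheory.integrable_indicator_iff measurableSet_Ici,
      IntegrableOn, Measure.restrict_restrict measurableSet_Ici]
    exact hloc.integrableOn_compact_subset Set.inter_subset_left
      (hK.inter_left isClosed_Ici)
  have hξ'int : ∀ u v : ℝ, IntervalIntegrable ξ' volume u v := fun u v =>
    ⟨(hξ'loc.integrableOn_isCompact isCompact_Icc).mono_set Set.Ioc_subset_Icc_self,
     (hξ'loc.integrableOn_isCompact isCompact_Icc).mono_set Set.Ioc_subset_Icc_self⟩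
  set I : ℝ → EuclideanSpace ℝ (Fin d) := fun t => ∫ s in (0:ℝ)..t, ξ' s with hIdef
  set X : ℝ → EuclideanSpace ℝ (Fin d) := fun t => Z 0 + I t with hXdef
  have hXcont : Continuous X :=
    continuous_const.add (intervalIntegral.continuous_primitive hξ'int 0)
  have hXZ : ∀ τ : ℝ, 0 ≤ τ → X τ = Z τ := by
    intro τ hτ
    rw [hXdef]
    simp only
    rw [hZeq τ hτ]
    congr 1
    rw [hIdef]
    apply intervalIntegral.integral_congr
    intro s hs
    rw [Set.uIcc_of_le hτ] at hs
    exact hξ'eq s hs.1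
  -- squared distances and their derivatives
  set Q : EuclideanSpace ℝ (Fin d) → ℝ → ℝ := fun a t => ‖X t - a‖^2 with hQdef
  set G : EuclideanSpace ℝ (Fin d) → ℝ → ℝ := fun a t => 2 * ⟪X t - a, ξ' t⟫ with hGdef
  have hQderiv : ∀ᵐ τ : ℝ, ∀ a : EuclideanSpace ℝ (Fin d), HasDerivAt (Q a) (G a τ) τ := by
    filter_upwards [ae_hasDerivAt_primitive hξ'loc] with τ hτ a
    have hX : HasDerivAt X (ξ' τ) τ := hτ.const_add (Z 0)
    have hY : HasDerivAt (fun t => X t - a) (ξ' τ) τ := hX.sub_const a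
    have h2 : HasDerivAt (fun t => (⟪X t - a, X t - a⟫ : ℝ)) (2 * ⟪X τ - a, ξ' τ⟫) τ := by
      have h3 := HasDerivAt.inner ℝ hY hY
      have h4 : (⟪X τ - a, ξ' τ⟫ : ℝ) + ⟪ξ' τ, X τ - a⟫ = 2 * ⟪X τ - a, ξ' τ⟫ := by
        rw [real_inner_comm (ξ' τ) (X τ - a)]; ring
      rw [h4] at h3
      exact h3
    have h5 : (Q a) = fun t => (⟪X t - a, X t - a⟫ : ℝ) :=
      funext fun t => by rw [hQdef]; simp only; rw [real_inner_self_eq_norm_sq]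
    rw [h5]
    exact h2
  -- contact-set argument : active derivatives agree a.e.
  have hpairs : ∀ᵐ τ : ℝ, ∀ a ∈ A₁ ∪ A₂, ∀ a' ∈ A₁ ∪ A₂,
      Q a τ = Q a' τ → G a τ = G a' τ := by
    have hcnt : (A₁ ∪ A₂).Countable := (hA₁fin.union hA₂fin).countable
    rw [ae_ball_iff hcnt]
    intro a ha
    rw [ae_ball_iff hcnt]
    intro a' ha'
    exact ae_deriv_eq_on_contact (hQderiv.mono fun τ h => h a) (hQderiv.mono fun τ h => h a')
  -- inclusion in pointwise form
  have hincl' : ∀ᵐ τ : ℝ, τ ∈ Set.Ici (0:ℝ) →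
      ξ τ ∈ (fun v => -(4 : ℝ)⁻¹ • v) '' outerClarkeField A₁ A₂ lam (Z τ) :=
    (ae_restrict_iff' measurableSet_Ici).1 hincl
  -- the exceptional null set
  set N : Set ℝ := {τ | ¬ ((∀ a : EuclideanSpace ℝ (Fin d), HasDerivAt (Q a) (G a τ) τ) ∧
      (∀ a ∈ A₁ ∪ A₂, ∀ a' ∈ A₁ ∪ A₂, Q a τ = Q a' τ → G a τ = G a' τ) ∧
      (τ ∈ Set.Ici (0:ℝ) →
        ξ τ ∈ (fun v => -(4 : ℝ)⁻¹ • v) '' outerClarkeField A₁ A₂ lam (Z τ)))} with hNdef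
  have hNnull : volume N = 0 := by
    rw [hNdef, ← MeasureTheory.ae_iff]
    filter_upwards [hQderiv, hpairs, hincl'] with τ h1 h2 h3
    exact ⟨h1, h2, h3⟩
  -- the potential along the flow
  set u : ℝ → ℝ := fun t =>
    lam * (Metric.infDist (X t) A₁)^2 + (1 - lam) * (Metric.infDist (X t) A₂)^2 with hudef
  have hueq : ∀ τ : ℝ, 0 ≤ τ → u τ = distPotential A₁ A₂ lam (Z τ) := by
    intro τ hτ
    simp only [hudef, distPotential]
    rw [hXZ τ hτ]
  have hucont : Continuous u := by
    apply Continuous.add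
    · exact continuous_const.mul (((continuous_infDist_pt A₁).comp hXcont).pow 2)
    · exact continuous_const.mul (((continuous_infDist_pt A₂).comp hXcont).pow 2)
  -- derivative of the potential at good times
  have hukey : ∀ τ : ℝ, 0 ≤ τ → τ ∉ N → HasDerivAt u (-4 * ‖ξ' τ‖^2) τ := by
    intro τ hτ0 hτN
    simp only [hNdef, Set.mem_setOf_eq, not_not] at hτN
    obtain ⟨hder, hpair, hinc⟩ := hτN
    obtain ⟨w, hw, hξw0⟩ := hinc hτ0
    have hξw : ξ τ = -(4:ℝ)⁻¹ • w := by simpa using hξw0.symm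
    have hξτ : ξ' τ = ξ τ := hξ'eq τ hτ0
    have hZX : Z τ = X τ := (hXZ τ hτ0).symm
    -- nearest points at time τ
    obtain ⟨a₁, ha₁A, ha₁d⟩ := hA₁fin.isCompact.exists_infDist_eq_dist hA₁ (X τ)
    obtain ⟨a₂, ha₂A, ha₂d⟩ := hA₂fin.isCompact.exists_infDist_eq_dist hA₂ (X τ)
    have ha₁n : ‖X τ - a₁‖ = Metric.infDist (X τ) A₁ := by rw [ha₁d, dist_eq_norm]
    have ha₂n : ‖X τ - a₂‖ = Metric.infDist (X τ) A₂ := by rw [ha₂d, dist_eq_norm]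
    -- derivatives of the squared distance functions
    have hM₁ : HasDerivAt (fun t => Metric.infDist (X t) A₁ ^ 2) (G a₁ τ) τ := by
      apply hasDerivAt_infDist_sq hA₁fin hA₁ (g := fun a => G a τ)
      · intro a _
        exact hder a
      · intro a ha han
        apply hpair a (Set.mem_union_left _ ha) a₁ (Set.mem_union_left _ ha₁A)
        show ‖X τ - a‖^2 = ‖X τ - a₁‖^2
        rw [han, ha₁n]
    have hM₂ : HasDerivAt (fun t => Metric.infDist (X t) A₂ ^ 2) (G a₂ τ) τ := by
      apply hasDerivAt_infDist_sq hA₂fin hA₂ (g := fun a => G a τ)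
      · intro a _
        exact hder a
      · intro a ha han
        apply hpair a (Set.mem_union_right _ ha) a₂ (Set.mem_union_right _ ha₂A)
        show ‖X τ - a‖^2 = ‖X τ - a₂‖^2
        rw [han, ha₂n]
    have hu' : HasDerivAt u (lam * G a₁ τ + (1 - lam) * G a₂ τ) τ :=
      (hM₁.const_mul lam).add (hM₂.const_mul (1 - lam))
    -- identify the derivative value using the convex hull structure
    set c : ℝ := lam * G a₁ τ + (1 - lam) * G a₂ τ with hcdef
    have hGen : ∀ p ∈ nearestPts A₁ (Z τ), ∀ q ∈ nearestPts A₂ (Z τ),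
        (⟪(2 * lam) • (Z τ - p) + (2 * (1 - lam)) • (Z τ - q), ξ τ⟫ : ℝ) = c := by
      intro p hp q hq
      have hpn : ‖X τ - p‖ = Metric.infDist (X τ) A₁ := by
        have := hp.2
        rwa [hZX] at this
      have hqn : ‖X τ - q‖ = Metric.infDist (X τ) A₂ := by
        have := hq.2
        rwa [hZX] at this
      have hGp : G p τ = G a₁ τ := by
        apply hpair p (Set.mem_union_left _ hp.1) a₁ (Set.mem_union_left _ ha₁A)
        show ‖X τ - p‖^2 = ‖X τ - a₁‖^2
        rw [hpn, ha₁n]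
      have hGq : G q τ = G a₂ τ := by
        apply hpair q (Set.mem_union_right _ hq.1) a₂ (Set.mem_union_right _ ha₂A)
        show ‖X τ - q‖^2 = ‖X τ - a₂‖^2
        rw [hqn, ha₂n]
      have hGpval : (G p τ : ℝ) = 2 * ⟪X τ - p, ξ' τ⟫ := rfl
      have hGqval : (G q τ : ℝ) = 2 * ⟪X τ - q, ξ' τ⟫ := rfl
      rw [inner_add_left, real_inner_smul_left, real_inner_smul_left, hZX, hcdef,
        ← hGp, ← hGq, hGpval, hGqval, hξτ]
      ring
    have hT : outerClarkeField A₁ A₂ lam (Z τ) ⊆ {y | (⟪y, ξ τ⟫ : ℝ) = c} := by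
      apply convexHull_min
      · rintro y ⟨p, hp, q, hq, rfl⟩
        exact hGen p hp q hq
      · intro y hy z hz α β hα hβ hαβ
        simp only [Set.mem_setOf_eq] at *
        rw [inner_add_left, real_inner_smul_left, real_inner_smul_left, hy, hz, ← add_mul,
          hαβ, one_mul]
    have hwc : (⟪w, ξ τ⟫ : ℝ) = c := hT hw
    have h1 : (⟪w, ξ τ⟫ : ℝ) = -(4:ℝ)⁻¹ * ‖w‖^2 := by
      rw [hξw, real_inner_smul_right, real_inner_self_eq_norm_sq]
    have h2 : ‖ξ' τ‖^2 = ((4:ℝ)⁻¹)^2 * ‖w‖^2 := by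
      rw [hξτ, hξw, norm_smul]
      simp [abs_of_nonneg]
      ring
    have hval : c = -4 * ‖ξ' τ‖^2 := by
      rw [h2, ← hwc, h1]
      ring
    rw [hcdef] at hval
    rw [← hval]
    exact hu'
  -- the main identity
  have hmain : ∀ a b : ℝ, 0 ≤ a → a ≤ b →
      u b - u a = -4 * ∫ τ in a..b, ‖ξ τ‖ ^ 2 := by
    intro a b ha hab
    have hIccIci : Set.Icc a b ⊆ Set.Ici (0:ℝ) := fun x hx => ha.trans hx.1
    -- a uniform bound for the weight in the absolute-continuity estimate
    obtain ⟨z0, hz0, hz0max⟩ := isCompact_Icc.exists_isMaxOn (Set.nonempty_Icc.2 hab)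
      (Continuous.continuousOn (by
        exact (continuous_const.mul ((continuous_infDist_pt A₁).comp hXcont)).add
          (continuous_const.mul ((continuous_infDist_pt A₂).comp hXcont)) :
        Continuous (fun t : ℝ =>
          |lam| * Metric.infDist (X t) A₁ + |1 - lam| * Metric.infDist (X t) A₂)))
    set C : ℝ := |lam| * Metric.infDist (X z0) A₁ + |1 - lam| * Metric.infDist (X z0) A₂
      with hCdef
    have hC0 : 0 ≤ C := by
      rw [hCdef]
      have h1 := Metric.infDist_nonneg (x := X z0) (s := A₁)
      have h2 := Metric.infDist_nonneg (x := X z0) (s := A₂)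
      have h3 : (0:ℝ) ≤ |lam| := abs_nonneg _
      have h4 : (0:ℝ) ≤ |1 - lam| := abs_nonneg _
      nlinarith
    -- integrability of the dominating function H
    set Hf : ℝ → ℝ := fun r => (2 * C) * ‖ξ' r‖ with hHfdef
    have hHint : IntegrableOn Hf (Set.Icc a b) volume :=
      ((hξ'loc.integrableOn_isCompact isCompact_Icc).norm).const_mul (2 * C)
    -- absolute continuity estimate
    have hXdiff : ∀ s t : ℝ, s ≤ t → ‖X t - X s‖ ≤ ∫ r in Set.Ioc s t, ‖ξ' r‖ := by
      intro s t hst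
      have h1 : X t - X s = ∫ r in s..t, ξ' r := by
        rw [hXdef]
        simp only
        rw [add_sub_add_left_eq_sub, hIdef]
        simp only
        rw [intervalIntegral.integral_interval_sub_left (hξ'int 0 t) (hξ'int 0 s)]
      rw [h1, ← intervalIntegral.integral_of_le hst]
      exact intervalIntegral.norm_integral_le_integral_norm hst
    have hLip : ∀ (B : Set (EuclideanSpace ℝ (Fin d))) (s t : ℝ),
        |Metric.infDist (X t) B - Metric.infDist (X s) B| ≤ ‖X t - X s‖ := by
      intro B s t
      rw [abs_sub_le_iff]
      constructor
      · have := Metric.infDist_le_infDist_add_dist (x := X t) (y := X s) (s := B)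
        rw [dist_eq_norm] at this
        linarith
      · have := Metric.infDist_le_infDist_add_dist (x := X s) (y := X t) (s := B)
        rw [dist_eq_norm, norm_sub_rev] at this
        linarith
    have hAC : ∀ s t : ℝ, a ≤ s → s ≤ t → t ≤ b →
        |u t - u s| ≤ ∫ r in Set.Ioc s t, Hf r := by
      intro s t has hst htb
      have hsmem : s ∈ Set.Icc a b := ⟨has, hst.trans htb⟩
      have htmem : t ∈ Set.Icc a b := ⟨has.trans hst, htb⟩
      have hCs := hz0max hsmem
      have hCt := hz0max htmem
      have hXd := hXdiff s t hst
      have hXnn : (0:ℝ) ≤ ‖X t - X s‖ := norm_nonneg _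
      have key : |u t - u s| ≤ (2 * C) * ‖X t - X s‖ := by
        have e1 : u t - u s =
            lam * ((Metric.infDist (X t) A₁)^2 - (Metric.infDist (X s) A₁)^2) +
            (1 - lam) * ((Metric.infDist (X t) A₂)^2 - (Metric.infDist (X s) A₂)^2) := by
          rw [hudef]; ring
        have habs : ∀ (B : Set (EuclideanSpace ℝ (Fin d))),
            |(Metric.infDist (X t) B)^2 - (Metric.infDist (X s) B)^2| ≤
            (Metric.infDist (X t) B + Metric.infDist (X s) B) * ‖X t - X s‖ := by
          intro B
          have h2 : (Metric.infDist (X t) B)^2 - (Metric.infDist (X s) B)^2 =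
              (Metric.infDist (X t) B - Metric.infDist (X s) B) *
              (Metric.infDist (X t) B + Metric.infDist (X s) B) := by ring
          rw [h2, abs_mul]
          have h3 : |Metric.infDist (X t) B + Metric.infDist (X s) B| =
              Metric.infDist (X t) B + Metric.infDist (X s) B := by
            rw [abs_of_nonneg]
            have := Metric.infDist_nonneg (x := X t) (s := B)
            have := Metric.infDist_nonneg (x := X s) (s := B)
            linarith
          rw [h3, mul_comm]
          refine mul_le_mul_of_nonneg_left (hLip B s t) ?_
          have h1 := Metric.infDist_nonneg (x := X t) (s := B)
          have h2 := Metric.infDist_nonneg (x := X s) (s := B)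
          linarith
        have h4 := habs A₁
        have h5 := habs A₂
        have h6 : |u t - u s| ≤ |lam| * |(Metric.infDist (X t) A₁)^2 -
            (Metric.infDist (X s) A₁)^2| + |1 - lam| * |(Metric.infDist (X t) A₂)^2 -
            (Metric.infDist (X s) A₂)^2| := by
          rw [e1]
          refine (abs_add_le _ _).trans ?_
          rw [abs_mul, abs_mul]
        have h7 : |lam| * ((Metric.infDist (X t) A₁ + Metric.infDist (X s) A₁) * ‖X t - X s‖) +
            |1 - lam| * ((Metric.infDist (X t) A₂ + Metric.infDist (X s) A₂) * ‖X t - X s‖) ≤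
            (2 * C) * ‖X t - X s‖ := by
          have e2 : |lam| * ((Metric.infDist (X t) A₁ + Metric.infDist (X s) A₁) * ‖X t - X s‖) +
              |1 - lam| * ((Metric.infDist (X t) A₂ + Metric.infDist (X s) A₂) * ‖X t - X s‖) =
              ((|lam| * Metric.infDist (X t) A₁ + |1 - lam| * Metric.infDist (X t) A₂) +
               (|lam| * Metric.infDist (X s) A₁ + |1 - lam| * Metric.infDist (X s) A₂)) *
               ‖X t - X s‖ := by ring
          rw [e2]
          apply mul_le_mul_of_nonneg_right _ hXnn
          have : (2:ℝ) * C = C + C := by ring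
          rw [this]
          exact add_le_add hCt hCs
        calc |u t - u s| ≤ |lam| * |(Metric.infDist (X t) A₁)^2 -
              (Metric.infDist (X s) A₁)^2| + |1 - lam| * |(Metric.infDist (X t) A₂)^2 -
              (Metric.infDist (X s) A₂)^2| := h6
          _ ≤ |lam| * ((Metric.infDist (X t) A₁ + Metric.infDist (X s) A₁) * ‖X t - X s‖) +
              |1 - lam| * ((Metric.infDist (X t) A₂ + Metric.infDist (X s) A₂) * ‖X t - X s‖) :=
            add_le_add (mul_le_mul_of_nonneg_left h4 (abs_nonneg _))
              (mul_le_mul_of_nonneg_left h5 (abs_nonneg _))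
          _ ≤ (2 * C) * ‖X t - X s‖ := h7
      calc |u t - u s| ≤ (2 * C) * ‖X t - X s‖ := key
        _ ≤ (2 * C) * ∫ r in Set.Ioc s t, ‖ξ' r‖ :=
          mul_le_mul_of_nonneg_left hXd (by positivity)
        _ = ∫ r in Set.Ioc s t, Hf r := by
          rw [hHfdef]
          exact (MeasureTheory.integral_const_mul _ _).symm
    -- integrability of the a.e. derivative φ
    set φf : ℝ → ℝ := fun r => -4 * ‖ξ' r‖^2 with hφfdef
    obtain ⟨t0, ht0, hRX⟩ := isCompact_Icc.exists_isMaxOn (Set.nonempty_Icc.2 hab)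
      hXcont.norm.continuousOn
    obtain ⟨am₁, ham₁A, hram₁⟩ := hA₁fin.isCompact.exists_isMaxOn hA₁
      continuous_norm.continuousOn
    obtain ⟨am₂, ham₂A, hram₂⟩ := hA₂fin.isCompact.exists_isMaxOn hA₂
      continuous_norm.continuousOn
    set CB : ℝ := 2 * |lam| * (‖X t0‖ + ‖am₁‖) + 2 * |1 - lam| * (‖X t0‖ + ‖am₂‖) with hCBdef
    have hCB0 : 0 ≤ CB := by rw [hCBdef]; positivity
    have hCB : ∀ τ ∈ Set.Icc a b, ∀ y ∈ outerClarkeField A₁ A₂ lam (Z τ), ‖y‖ ≤ CB := by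
      intro τ hτmem y hy
      have hτ0 : (0:ℝ) ≤ τ := ha.trans hτmem.1
      have hZXτ : Z τ = X τ := (hXZ τ hτ0).symm
      have hball : outerClarkeField A₁ A₂ lam (Z τ) ⊆ Metric.closedBall 0 CB := by
        apply convexHull_min _ (convex_closedBall 0 CB)
        rintro y' ⟨p, hp, q, hq, rfl⟩
        rw [mem_closedBall_zero_iff]
        have hXτnorm : ‖X τ‖ ≤ ‖X t0‖ := hRX hτmem
        have hp1 : ‖p‖ ≤ ‖am₁‖ := hram₁ hp.1
        have hq1 : ‖q‖ ≤ ‖am₂‖ := hram₂ hq.1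
        calc ‖(2 * lam) • (Z τ - p) + (2 * (1 - lam)) • (Z τ - q)‖
            ≤ ‖(2 * lam) • (Z τ - p)‖ + ‖(2 * (1 - lam)) • (Z τ - q)‖ := norm_add_le _ _
          _ = |2 * lam| * ‖Z τ - p‖ + |2 * (1 - lam)| * ‖Z τ - q‖ := by
              rw [norm_smul, norm_smul, Real.norm_eq_abs, Real.norm_eq_abs]
          _ ≤ (2 * |lam|) * (‖X t0‖ + ‖am₁‖) + (2 * |1 - lam|) * (‖X t0‖ + ‖am₂‖) := by
              rw [abs_mul, abs_mul, abs_two]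
              apply add_le_add
              · apply mul_le_mul_of_nonneg_left _ (by positivity)
                calc ‖Z τ - p‖ ≤ ‖Z τ‖ + ‖p‖ := norm_sub_le _ _
                  _ ≤ ‖X t0‖ + ‖am₁‖ := by rw [hZXτ]; exact add_le_add hXτnorm hp1
              · apply mul_le_mul_of_nonneg_left _ (by positivity)
                calc ‖Z τ - q‖ ≤ ‖Z τ‖ + ‖q‖ := norm_sub_le _ _
                  _ ≤ ‖X t0‖ + ‖am₂‖ := by rw [hZXτ]; exact add_le_add hXτnorm hq1
          _ = CB := by rw [hCBdef]
      have := hball hy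
      rwa [mem_closedBall_zero_iff] at this
    have hφbound : ∀ᵐ r ∂(volume.restrict (Set.Icc a b)), ‖φf r‖ ≤ 4 * ((4:ℝ)⁻¹ * CB)^2 := by
      have h0 : ∀ᵐ r ∂(volume.restrict (Set.Icc a b)), r ∈ Set.Icc a b :=
        ae_restrict_mem measurableSet_Icc
      have h1 : ∀ᵐ r ∂(volume.restrict (Set.Icc a b)),
          ξ r ∈ (fun v => -(4 : ℝ)⁻¹ • v) '' outerClarkeField A₁ A₂ lam (Z r) :=
        ae_mono (Measure.restrict_mono hIccIci le_rfl) hincl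
      filter_upwards [h0, h1] with r hr hr2
      obtain ⟨w, hw, hξw0⟩ := hr2
      have hξw : ξ r = -(4:ℝ)⁻¹ • w := by simpa using hξw0.symm
      have hwle : ‖w‖ ≤ CB := hCB r hr w hw
      have hnorm : ‖ξ r‖ ≤ (4:ℝ)⁻¹ * CB := by
        rw [hξw, norm_smul]
        have : ‖(-(4:ℝ)⁻¹)‖ = (4:ℝ)⁻¹ := by
          rw [Real.norm_eq_abs, abs_neg, abs_of_nonneg]; norm_num
        rw [this]
        exact mul_le_mul_of_nonneg_left hwle (by norm_num)
      have hξ'r : ξ' r = ξ r := hξ'eq r (ha.trans hr.1)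
      rw [hφfdef]
      simp only [Real.norm_eq_abs]
      rw [abs_mul, hξ'r]
      have h3 : |‖ξ r‖^2| = ‖ξ r‖^2 := abs_of_nonneg (by positivity)
      rw [h3]
      have h4 : ‖ξ r‖^2 ≤ ((4:ℝ)⁻¹ * CB)^2 :=
        pow_le_pow_left₀ (norm_nonneg _) hnorm 2
      have h5 : |(-4:ℝ)| = 4 := by norm_num
      rw [h5]
      linarith
    have hφmeas : AEStronglyMeasurable φf (volume.restrict (Set.Icc a b)) := by
      have hn : AEStronglyMeasurable (fun r => ‖ξ' r‖) (volume.restrict (Set.Icc a b)) :=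
        (hξ'loc.aestronglyMeasurable.restrict).norm
      have : φf = fun r => -4 * (‖ξ' r‖ * ‖ξ' r‖) := funext fun r => by rw [hφfdef]; ring
      rw [this]
      exact (hn.mul hn).const_mul (-4)
    have hφint : IntegrableOn φf (Set.Icc a b) volume := by
      apply Integrable.mono' (g := fun _ => 4 * ((4:ℝ)⁻¹ * CB)^2) _ hφmeas hφbound
      exact MeasureTheory.integrableOn_const measure_Icc_lt_top.ne
    -- the FTC application
    have key := integral_eq_sub_of_ae_hasDerivAt hab hucont.continuousOn hHint hAC hφint
      hNnull (fun t ht htN => hukey t (ha.trans ht.1) htN)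
    rw [key]
    rw [← intervalIntegral.integral_of_le hab]
    have e2 : ∫ r in a..b, φf r = ∫ r in a..b, -4 * ‖ξ r‖^2 := by
      apply intervalIntegral.integral_congr
      intro r hr
      rw [Set.uIcc_of_le hab] at hr
      rw [hφfdef]
      simp only
      rw [hξ'eq r (ha.trans hr.1)]
    rw [e2, intervalIntegral.integral_const_mul]
  constructor
  · intro a b ha hab
    rw [← hueq a ha, ← hueq b (ha.trans hab)]
    exact hmain a b ha hab
  · intro x hx y hy hxy
    simp only
    rw [← hueq x hx, ← hueq y hy]
    have h1 := hmain x y hx hxy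
    have h2 : 0 ≤ ∫ τ in x..y, ‖ξ τ‖ ^ 2 :=
      intervalIntegral.integral_nonneg hxy fun t _ => by positivity
    linarith
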